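/- arXiv:1503.06013 — 4 statements merged into one kernel-verified Lean document; each statement's English description precedes it below -/
import Mathlib

section
/- For all distinct positive real numbers a and b, 1 < I(a,b)/√(I(A(a,b)², G(a,b)²)) < 2/√e. -/
noncomputable def A (a b : ℝ) : ℝ := (a + b) / 2
noncomputable def G (a b : ℝ) : ℝ := Real.sqrt (a * b)
noncomputable def I (a b : ℝ) : ℝ := (1 / Real.exp 1) * (a ^ a / b ^ b) ^ (1 / (a - b))

open Real Set

/-! ### One-variable lemmas -/

noncomputable def gg (t : ℝ) : ℝ :=
  2*t*(t+1)*Real.log t - 2*(t+1)^2*Real.log ((t+1)/2) - (t-1)^2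
noncomputable def gg1 (t : ℝ) : ℝ :=
  (4*t+2)*Real.log t - 4*(t+1)*Real.log ((t+1)/2) - 2*(t-1)
noncomputable def pp1 (t : ℝ) : ℝ :=
  4*Real.log 2*(t-1) - (4*t+2)*Real.log t + 4*(t+1)*Real.log ((t+1)/2)
noncomputable def pp (t : ℝ) : ℝ := (2*Real.log 2 - 1)*(t-1)^2 - gg t

lemma log_lb {x : ℝ} (hx : 0 < x) (h1 : x ≠ 1) : 1 - x⁻¹ < Real.log x := by
  have := Real.log_lt_sub_one_of_pos (inv_pos.mpr hx) (by simpa using h1)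
  rw [Real.log_inv] at this; linarith

lemma hd_gg1 {t : ℝ} (ht : 0 < t) :
    HasDerivAt gg1 (4*Real.log t - 4*Real.log ((t+1)/2) + 2/t - 2) t := by
  have h1 : HasDerivAt (fun t : ℝ => (4*t+2)*Real.log t)
      (4*1*Real.log t + (4*t+2)*t⁻¹) t :=
    (((hasDerivAt_id t).const_mul 4).add_const 2).mul (Real.hasDerivAt_log ht.ne')
  have hu : HasDerivAt (fun t : ℝ => (t+1)/2) (1/2) t := by
    simpa using ((hasDerivAt_id t).add_const 1).div_const 2
  have h2 : HasDerivAt (fun t : ℝ => Real.log ((t+1)/2)) (((t+1)/2)⁻¹ * (1/2)) t :=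
    (Real.hasDerivAt_log (by positivity)).comp t hu
  have h3 : HasDerivAt (fun t : ℝ => (4*t+4)*Real.log ((t+1)/2))
      (4*1*Real.log ((t+1)/2) + (4*t+4)*(((t+1)/2)⁻¹ * (1/2))) t :=
    (((hasDerivAt_id t).const_mul 4).add_const 4).mul h2
  have h4 : HasDerivAt (fun t : ℝ => 2*(t-1)) (2*1) t :=
    ((hasDerivAt_id t).sub_const 1).const_mul 2
  have h5 := (h1.sub h3).sub h4
  have heq : gg1 = fun t : ℝ => ((4*t+2)*Real.log t - (4*t+4)*Real.log ((t+1)/2)) - 2*(t-1) := by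
    funext t; simp only [gg1]; ring
  rw [heq]
  refine h5.congr_deriv ?_
  have h0 : t + 1 ≠ 0 := by positivity
  field_simp
  ring

lemma key2 {x : ℝ} (hx1 : 1 < x) :
    0 < 4*Real.log x - 4*Real.log ((x+1)/2) + 2/x - 2 := by
  have hx0 : (0:ℝ) < x := by linarith
  have hr : Real.log x - Real.log ((x+1)/2) = Real.log (2*x/(x+1)) := by
    rw [Real.log_div (by positivity) (by norm_num),
      Real.log_div (by positivity) (by positivity), Real.log_mul (by norm_num) hx0.ne']
    ring
  have hlb := log_lb (x := 2*x/(x+1)) (by positivity)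
    (by intro h; rw [div_eq_one_iff_eq (by positivity)] at h; linarith)
  have hinv : (2*x/(x+1))⁻¹ = (x+1)/(2*x) := by rw [inv_div]
  rw [hinv] at hlb
  have h2 : 1 - (x+1)/(2*x) = (x-1)/(2*x) := by field_simp; ring
  rw [h2] at hlb
  have e : 4*((x-1)/(2*x)) + 2/x - 2 = 0 := by field_simp; ring
  linarith [hlb, e, hr]

lemma gg1_pos {t : ℝ} (ht : 1 < t) : 0 < gg1 t := by
  have hmono : StrictMonoOn gg1 (Ici 1) := by
    apply strictMonoOn_of_deriv_pos (convex_Ici 1)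
    · intro x hx
      exact (hd_gg1 (by simp at hx; linarith)).continuousAt.continuousWithinAt
    · intro x hx
      rw [interior_Ici] at hx
      rw [(hd_gg1 (by linarith [mem_Ioi.mp hx])).deriv]
      exact key2 hx
  have h0 : gg1 1 = 0 := by norm_num [gg1]
  have := hmono self_mem_Ici (mem_Ici.mpr ht.le) ht
  rwa [h0] at this

lemma hd_gg {t : ℝ} (ht : 0 < t) : HasDerivAt gg (gg1 t) t := by
  have h1 : HasDerivAt (fun t : ℝ => (2*t^2+2*t)*Real.log t)
      ((2*(2*t)+2*1)*Real.log t + (2*t^2+2*t)*t⁻¹) t := by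
    have h := (((hasDerivAt_pow 2 t).const_mul 2).add ((hasDerivAt_id t).const_mul 2)).mul
      (Real.hasDerivAt_log ht.ne')
    exact h.congr_deriv (by simp only [Pi.add_apply, Pi.pow_apply, id]; push_cast; ring)
  have hu : HasDerivAt (fun t : ℝ => (t+1)/2) (1/2) t := by
    simpa using ((hasDerivAt_id t).add_const 1).div_const 2
  have h2 : HasDerivAt (fun t : ℝ => Real.log ((t+1)/2)) (((t+1)/2)⁻¹ * (1/2)) t :=
    (Real.hasDerivAt_log (by positivity)).comp t hu
  have h3 : HasDerivAt (fun t : ℝ => (2*(t+1)^2)*Real.log ((t+1)/2))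
      ((2*(2*(t+1)*1))*Real.log ((t+1)/2) + (2*(t+1)^2)*(((t+1)/2)⁻¹ * (1/2))) t := by
    have h := ((((hasDerivAt_id t).add_const 1).pow 2).const_mul 2).mul h2
    exact h.congr_deriv (by simp only [Pi.add_apply, Pi.pow_apply, id]; push_cast; ring)
  have h4 : HasDerivAt (fun t : ℝ => (t-1)^2) (2*(t-1)^1*1) t :=
    ((hasDerivAt_id t).sub_const 1).pow 2
  have h5 := (h1.sub h3).sub h4
  have heq : gg = fun t : ℝ => ((2*t^2+2*t)*Real.log t - (2*(t+1)^2)*Real.log ((t+1)/2)) - (t-1)^2 := by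
    funext t; simp only [gg]; ring
  rw [heq]
  refine h5.congr_deriv ?_
  have h0 : t + 1 ≠ 0 := by positivity
  simp only [gg1]
  field_simp
  ring

lemma gg_pos {t : ℝ} (ht : 1 < t) : 0 < gg t := by
  have hmono : StrictMonoOn gg (Ici 1) := by
    apply strictMonoOn_of_deriv_pos (convex_Ici 1)
    · intro x hx
      exact (hd_gg (by simp at hx; linarith)).continuousAt.continuousWithinAt
    · intro x hx
      rw [interior_Ici] at hx
      rw [(hd_gg (by linarith [mem_Ioi.mp hx])).deriv]
      exact gg1_pos hx
  have h0 : gg 1 = 0 := by norm_num [gg]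
  have := hmono self_mem_Ici (mem_Ici.mpr ht.le) ht
  rwa [h0] at this

lemma hd_pp1 {t : ℝ} (ht : 0 < t) :
    HasDerivAt pp1 (4*Real.log 2 + 4*Real.log ((t+1)/2) - 4*Real.log t - 2/t) t := by
  have ha : HasDerivAt (fun t : ℝ => 4*Real.log 2*(t-1)) (4*Real.log 2) t := by
    simpa using ((hasDerivAt_id t).sub_const 1).const_mul (4*Real.log 2)
  have h1 : HasDerivAt (fun t : ℝ => (4*t+2)*Real.log t)
      (4*1*Real.log t + (4*t+2)*t⁻¹) t :=
    (((hasDerivAt_id t).const_mul 4).add_const 2).mul (Real.hasDerivAt_log ht.ne')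
  have hu : HasDerivAt (fun t : ℝ => (t+1)/2) (1/2) t := by
    simpa using ((hasDerivAt_id t).add_const 1).div_const 2
  have h2 : HasDerivAt (fun t : ℝ => Real.log ((t+1)/2)) (((t+1)/2)⁻¹ * (1/2)) t :=
    (Real.hasDerivAt_log (by positivity)).comp t hu
  have h3 : HasDerivAt (fun t : ℝ => (4*t+4)*Real.log ((t+1)/2))
      (4*1*Real.log ((t+1)/2) + (4*t+4)*(((t+1)/2)⁻¹ * (1/2))) t :=
    (((hasDerivAt_id t).const_mul 4).add_const 4).mul h2
  have h5 := (ha.sub h1).add h3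
  have heq : pp1 = fun t : ℝ => (4*Real.log 2*(t-1) - (4*t+2)*Real.log t) + (4*t+4)*Real.log ((t+1)/2) := by
    funext t; simp only [pp1]; ring
  rw [heq]
  refine h5.congr_deriv ?_
  have h0 : t + 1 ≠ 0 := by positivity
  field_simp
  ring

lemma key2b {x : ℝ} (hx1 : 1 < x) :
    0 < 4*Real.log 2 + 4*Real.log ((x+1)/2) - 4*Real.log x - 2/x := by
  have hx0 : (0:ℝ) < x := by linarith
  have hr : Real.log 2 + Real.log ((x+1)/2) - Real.log x = Real.log ((x+1)/x) := by
    rw [Real.log_div (by positivity) hx0.ne', Real.log_div (by positivity) (by norm_num)]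
    ring
  have hpos : (0:ℝ) < (x+1)/x := by positivity
  have hne : (x+1)/x ≠ 1 := by
    intro h; rw [div_eq_one_iff_eq hx0.ne'] at h; linarith
  have hlb := Real.log_lt_sub_one_of_pos (inv_pos.mpr hpos) (by rw [Ne, inv_eq_one]; exact hne)
  rw [Real.log_inv] at hlb
  have hinv : ((x+1)/x)⁻¹ = x/(x+1) := by rw [inv_div]
  rw [hinv] at hlb
  have e1 : 1 - x/(x+1) = 1/(x+1) := by field_simp; ring
  have e2 : 4*(1/(x+1)) - 2/x = 2*(x-1)/(x*(x+1)) := by field_simp; ring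
  have e3 : 0 < 2*(x-1)/(x*(x+1)) := div_pos (by linarith) (by positivity)
  linarith [hlb, e1, e2, e3, hr]

lemma pp1_pos {t : ℝ} (ht : 1 < t) : 0 < pp1 t := by
  have hmono : StrictMonoOn pp1 (Ici 1) := by
    apply strictMonoOn_of_deriv_pos (convex_Ici 1)
    · intro x hx
      exact (hd_pp1 (by simp at hx; linarith)).continuousAt.continuousWithinAt
    · intro x hx
      rw [interior_Ici] at hx
      rw [(hd_pp1 (by linarith [mem_Ioi.mp hx])).deriv]
      exact key2b hx
  have h0 : pp1 1 = 0 := by norm_num [pp1]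
  have := hmono self_mem_Ici (mem_Ici.mpr ht.le) ht
  rwa [h0] at this

lemma hd_pp {t : ℝ} (ht : 0 < t) : HasDerivAt pp (pp1 t) t := by
  have h1 : HasDerivAt (fun t : ℝ => (2*Real.log 2 - 1)*(t-1)^2)
      ((2*Real.log 2 - 1)*(2*(t-1)^1*1)) t :=
    (((hasDerivAt_id t).sub_const 1).pow 2).const_mul _
  have h5 := h1.sub (hd_gg ht)
  have : (2*Real.log 2 - 1)*(2*(t-1)^1*1) - gg1 t = pp1 t := by
    simp only [gg1, pp1]; ring
  rw [← this]
  exact h5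

lemma pp_pos {t : ℝ} (ht : 1 < t) : 0 < pp t := by
  have hmono : StrictMonoOn pp (Ici 1) := by
    apply strictMonoOn_of_deriv_pos (convex_Ici 1)
    · intro x hx
      exact (hd_pp (by simp at hx; linarith)).continuousAt.continuousWithinAt
    · intro x hx
      rw [interior_Ici] at hx
      rw [(hd_pp (by linarith [mem_Ioi.mp hx])).deriv]
      exact pp1_pos hx
  have h0 : pp 1 = 0 := by norm_num [pp, gg]
  have := hmono self_mem_Ici (mem_Ici.mpr ht.le) ht
  rwa [h0] at this

/-! ### Properties of I -/

lemma I_pos {a b : ℝ} (ha : 0 < a) (hb : 0 < b) : 0 < I a b := by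
  unfold I
  have h1 : (0:ℝ) < a ^ a / b ^ b :=
    div_pos (Real.rpow_pos_of_pos ha a) (Real.rpow_pos_of_pos hb b)
  have := Real.rpow_pos_of_pos h1 (1/(a-b))
  positivity

lemma log_I {a b : ℝ} (ha : 0 < a) (hb : 0 < b) :
    Real.log (I a b) = (a*Real.log a - b*Real.log b)/(a-b) - 1 := by
  unfold I
  have h1 : (0:ℝ) < a ^ a / b ^ b :=
    div_pos (Real.rpow_pos_of_pos ha a) (Real.rpow_pos_of_pos hb b)
  rw [Real.log_mul (by positivity) (Real.rpow_pos_of_pos h1 _).ne',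
    Real.log_rpow h1, Real.log_div (Real.rpow_pos_of_pos ha a).ne'
      (Real.rpow_pos_of_pos hb b).ne', Real.log_rpow ha, Real.log_rpow hb,
    one_div (Real.exp 1), Real.log_inv, Real.log_exp]
  rw [div_eq_mul_inv]
  ring

lemma I_symm {a b : ℝ} (ha : 0 < a) (hb : 0 < b) : I a b = I b a := by
  rw [← Real.exp_log (I_pos ha hb), ← Real.exp_log (I_pos hb ha),
    log_I ha hb, log_I hb ha]
  congr 1
  rcases eq_or_ne a b with h | h
  · rw [h]
  · have h1 : a - b ≠ 0 := sub_ne_zero.mpr h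
    have h2 : b - a ≠ 0 := sub_ne_zero.mpr (Ne.symm h)
    field_simp
    ring

/-! ### Main reduction -/

lemma main_ineq {a b : ℝ} (hb : 0 < b) (hlt : b < a) :
    1 < I a b / Real.sqrt (I (A a b ^ 2) (G a b ^ 2)) ∧
    I a b / Real.sqrt (I (A a b ^ 2) (G a b ^ 2)) < 2 / Real.sqrt (Real.exp 1) := by
  have ha : 0 < a := hb.trans hlt
  set t := a / b with htdef
  have ht : 1 < t := (one_lt_div hb).mpr hlt
  have hbt : a = b * t := by rw [htdef]; field_simp
  have hxeq : A a b ^ 2 = (b*(t+1)/2)^2 := by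
    unfold A; rw [hbt]; ring
  have hyeq : G a b ^ 2 = t*b^2 := by
    unfold G; rw [Real.sq_sqrt (by positivity), hbt]; ring
  have ht1 : (0:ℝ) < (t+1)/2 := by linarith
  have hx0 : (0:ℝ) < (b*(t+1)/2)^2 := by positivity
  have hy0 : (0:ℝ) < t*b^2 := by positivity
  have hlogx : Real.log ((b*(t+1)/2)^2) = 2*(Real.log b + Real.log ((t+1)/2)) := by
    rw [Real.log_pow, show b*(t+1)/2 = b*((t+1)/2) by ring,
      Real.log_mul hb.ne' ht1.ne']
    push_cast; ring
  have hlogy : Real.log (t*b^2) = Real.log t + 2*Real.log b := by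
    rw [Real.log_mul (by positivity) (by positivity), Real.log_pow]
    push_cast; ring
  have hloga : Real.log a = Real.log b + Real.log t := by
    rw [hbt, Real.log_mul hb.ne' (by positivity)]
  have h2t : (0:ℝ) < 2*(t-1)^2 := mul_pos two_pos (pow_pos (by linarith) 2)
  have key : Real.log (I a b) - (1/2)*Real.log (I (A a b ^ 2) (G a b ^ 2))
      = gg t / (2*(t-1)^2) := by
    rw [hxeq, hyeq, log_I ha hb, log_I hx0 hy0, hloga, hlogx, hlogy, hbt]
    have hd : (b*(t+1)/2)^2 - t*b^2 = (b*(t-1))^2/4 := by ring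
    have hd1 : b*t - b = b*(t-1) := by ring
    rw [hd, hd1, gg]
    have hb0 : b ≠ 0 := hb.ne'
    have ht0 : t - 1 ≠ 0 := by intro h; nlinarith
    field_simp
    ring
  have hIx : 0 < I ((b*(t+1)/2)^2) (t*b^2) := I_pos hx0 hy0
  have hIx' : 0 < I (A a b ^ 2) (G a b ^ 2) := by rw [hxeq, hyeq]; exact hIx
  have hsq : 0 < Real.sqrt (I (A a b ^ 2) (G a b ^ 2)) := Real.sqrt_pos.mpr hIx'
  have hlogsq : Real.log (Real.sqrt (I (A a b ^ 2) (G a b ^ 2)))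
      = (1/2)*Real.log (I (A a b ^ 2) (G a b ^ 2)) := by
    rw [Real.log_sqrt hIx'.le]; ring
  constructor
  · rw [lt_div_iff₀ hsq, one_mul,
      ← Real.log_lt_log_iff hsq (I_pos ha hb), hlogsq]
    have hpos : 0 < gg t / (2*(t-1)^2) := div_pos (gg_pos ht) h2t
    linarith [key]
  · have hrpos : (0:ℝ) < 2 / Real.sqrt (Real.exp 1) := by positivity
    have hlpos : 0 < I a b / Real.sqrt (I (A a b ^ 2) (G a b ^ 2)) :=
      div_pos (I_pos ha hb) hsq
    rw [← Real.log_lt_log_iff hlpos hrpos,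
      Real.log_div (I_pos ha hb).ne' hsq.ne', hlogsq,
      Real.log_div (by norm_num) (Real.sqrt_pos.mpr (Real.exp_pos 1)).ne',
      Real.log_sqrt (Real.exp_pos 1).le, Real.log_exp]
    have : gg t / (2*(t-1)^2) < (2*Real.log 2 - 1)/2 := by
      have hpp := pp_pos ht
      rw [pp] at hpp
      rw [div_lt_div_iff₀ h2t two_pos]
      nlinarith [hpp]
    linarith [key, this]

theorem stmt_0 (a b : ℝ) (ha : 0 < a) (hb : 0 < b) (hab : a ≠ b) :
    1 < I a b / Real.sqrt (I (A a b ^ 2) (G a b ^ 2)) ∧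
    I a b / Real.sqrt (I (A a b ^ 2) (G a b ^ 2)) < 2 / Real.sqrt (Real.exp 1) := by
  rcases hab.lt_or_gt with h | h
  · have := main_ineq ha h
    have hA : A b a = A a b := by unfold A; ring
    have hG : G b a = G a b := by unfold G; rw [mul_comm]
    rw [hA, hG, I_symm hb ha] at this
    exact this
  · exact main_ineq hb h
end

section
/- For all distinct positive real numbers a and b, 2·I(a,b)² > A(a,b)² + G(a,b)²; equivalently, I(a,b) > Q(A(a,b), G(a,b)) where Q(x,y) = √((x²+y²)/2) is the root-square mean. -/
noncomputable def Q (a b : ℝ) : ℝ := Real.sqrt ((a ^ 2 + b ^ 2) / 2)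


open Real Set

noncomputable def Ff (t : ℝ) : ℝ :=
  2*t*Real.log t - (t-1)*(2 + Real.log ((t^2+6*t+1)/8))

noncomputable def Fd (t : ℝ) : ℝ :=
  2*Real.log t - Real.log (t^2+6*t+1) + (8*t+8)/(t^2+6*t+1) + (3*Real.log 2 - 2)

noncomputable def Fdd (t : ℝ) : ℝ :=
  2*t⁻¹ - (2*t+6)/(t^2+6*t+1)
    + (8*(t^2+6*t+1) - (8*t+8)*(2*t+6))/(t^2+6*t+1)^2

lemma hDpos {t : ℝ} (ht : 0 < t) : 0 < t^2+6*t+1 := by nlinarith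

lemma hpoly (t : ℝ) : HasDerivAt (fun x : ℝ => x^2+6*x+1) (2*t+6) t := by
  have h := ((hasDerivAt_pow 2 t).add ((hasDerivAt_id t).const_mul 6)).add_const 1
  refine h.congr_deriv ?_
  ring

lemma hasDerivAt_Ff {t : ℝ} (ht : 0 < t) : HasDerivAt Ff (Fd t) t := by
  have hD := hDpos ht
  have h8 : (0:ℝ) < (t^2+6*t+1)/8 := by linarith
  have h1 : HasDerivAt (fun x : ℝ => 2*x*Real.log x) (2*Real.log t + 2) t := by
    have := ((hasDerivAt_id t).const_mul 2).mul (Real.hasDerivAt_log ht.ne')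
    refine this.congr_deriv ?_
    field_simp
    simp only [id]; ring
  have h2 : HasDerivAt (fun x : ℝ => (x-1)*(2 + Real.log ((x^2+6*x+1)/8)))
      (1*(2 + Real.log ((t^2+6*t+1)/8)) + (t-1)*(((2*t+6)/8)/((t^2+6*t+1)/8))) t := by
    have hg : HasDerivAt (fun x : ℝ => (x^2+6*x+1)/8) ((2*t+6)/8) t := (hpoly t).div_const 8
    have hlog : HasDerivAt (fun x : ℝ => Real.log ((x^2+6*x+1)/8))
        (((2*t+6)/8)/((t^2+6*t+1)/8)) t := hg.log h8.ne'
    have hsub : HasDerivAt (fun x : ℝ => x - 1) 1 t := (hasDerivAt_id t).sub_const 1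
    exact hsub.mul (hlog.const_add 2)
  have := h1.sub h2
  refine this.congr_deriv ?_
  unfold Fd
  rw [Real.log_div hD.ne' (by norm_num), show (8:ℝ) = 2^3 by norm_num, Real.log_pow]
  push_cast
  field_simp
  ring

lemma hasDerivAt_Fd {t : ℝ} (ht : 0 < t) : HasDerivAt Fd (Fdd t) t := by
  have hD := hDpos ht
  have h1 : HasDerivAt (fun x : ℝ => 2*Real.log x) (2*t⁻¹) t :=
    (Real.hasDerivAt_log ht.ne').const_mul 2
  have h2 : HasDerivAt (fun x : ℝ => Real.log (x^2+6*x+1)) ((2*t+6)/(t^2+6*t+1)) t :=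
    (hpoly t).log hD.ne'
  have h3 : HasDerivAt (fun x : ℝ => (8*x+8)/(x^2+6*x+1))
      ((8*(t^2+6*t+1) - (8*t+8)*(2*t+6))/(t^2+6*t+1)^2) t := by
    have hn : HasDerivAt (fun x : ℝ => 8*x+8) 8 t := by
      have := ((hasDerivAt_id t).const_mul 8).add_const 8
      simpa using this
    exact hn.div (hpoly t) hD.ne'
  have := ((h1.sub h2).add h3).add_const (3*Real.log 2 - 2)
  exact this

lemma Fdd_pos {t : ℝ} (h1 : 1 < t) (h7 : t < 7) : 0 < Fdd t := by
  have ht : 0 < t := by linarith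
  have hD := hDpos ht
  have key : Fdd t = (-2*(t-1)*(t^2-10*t+1))/(t*(t^2+6*t+1)^2) := by
    unfold Fdd
    field_simp
    ring
  rw [key]
  apply div_pos
  · nlinarith [mul_pos (sub_pos.2 h1) (sub_pos.2 h7)]
  · positivity

lemma Fd_one : Fd 1 = 0 := by
  unfold Fd
  norm_num
  rw [show (8:ℝ) = 2^3 by norm_num, Real.log_pow]
  push_cast
  ring

lemma Fd_pos_small {t : ℝ} (h1 : 1 < t) (h7 : t ≤ 7) : 0 < Fd t := by
  have mono : StrictMonoOn Fd (Icc 1 7) := by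
    apply strictMonoOn_of_deriv_pos (convex_Icc 1 7)
    · intro x hx
      exact (hasDerivAt_Fd (by linarith [hx.1] : (0:ℝ) < x)).continuousAt.continuousWithinAt
    · intro x hx
      rw [interior_Icc] at hx
      rw [(hasDerivAt_Fd (by linarith [hx.1] : (0:ℝ) < x)).deriv]
      exact Fdd_pos hx.1 hx.2
  have := mono (by constructor <;> norm_num) (⟨le_of_lt h1, h7⟩ : t ∈ Icc 1 7) h1
  rwa [Fd_one] at this

lemma trap {y : ℝ} (hy : 1 ≤ y) : Real.log y ≤ (y - 1/y)/2 := by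
  have hder : ∀ x : ℝ, 0 < x →
      HasDerivAt (fun y : ℝ => (y - 1/y)/2 - Real.log y) ((1 + (x^2)⁻¹)/2 - x⁻¹) x := by
    intro x hx0
    have h1 : HasDerivAt (fun y : ℝ => 1/y) (-(x^2)⁻¹) x := by
      simpa [one_div] using hasDerivAt_inv hx0.ne'
    have := (((hasDerivAt_id x).sub h1).div_const 2).sub (Real.hasDerivAt_log hx0.ne')
    refine this.congr_deriv ?_
    ring
  have mono : MonotoneOn (fun y : ℝ => (y - 1/y)/2 - Real.log y) (Ici 1) := by
    apply monotoneOn_of_deriv_nonneg (convex_Ici 1)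
    · intro x hx
      exact (hder x (by linarith [mem_Ici.1 hx])).continuousAt.continuousWithinAt
    · intro x hx
      rw [interior_Ici] at hx
      exact (hder x (by linarith [mem_Ioi.1 hx])).differentiableAt.differentiableWithinAt
    · intro x hx
      rw [interior_Ici] at hx
      have hx0 : (0:ℝ) < x := by linarith [mem_Ioi.1 hx]
      rw [(hder x hx0).deriv, sub_nonneg, inv_le_iff_one_le_mul₀ hx0]
      rw [div_mul_eq_mul_div, le_div_iff₀ (by norm_num : (0:ℝ) < 2)]
      have h2 : (x^2)⁻¹ * x^2 = 1 := inv_mul_cancel₀ (by positivity)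
      nlinarith [sq_nonneg (x-1)]
  have := mono (mem_Ici.2 le_rfl) (mem_Ici.2 hy) hy
  simp only [Real.log_one, one_div] at this ⊢
  norm_num at this
  linarith

lemma log_two_lb : (0.693 : ℝ) < Real.log 2 := by
  have := Real.log_two_gt_d9
  linarith

lemma Fd_pos_large {t : ℝ} (h7 : 7 ≤ t) : 0 < Fd t := by
  have ht : 0 < t := by linarith
  have hD := hDpos ht
  have ht2 : (0:ℝ) < t^2 := by positivity
  set y : ℝ := (t^2+6*t+1)/t^2 with hy
  have hy1 : 1 ≤ y := by
    rw [hy, le_div_iff₀ ht2]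
    nlinarith
  have hlogy : Real.log y = Real.log (t^2+6*t+1) - 2*Real.log t := by
    rw [hy, Real.log_div hD.ne' ht2.ne', Real.log_pow]
    push_cast; ring
  have htrap := trap hy1
  have hyy : (y - 1/y)/2 = ((t^2+6*t+1)/t^2 - t^2/(t^2+6*t+1))/2 := by
    rw [hy, one_div_div]
  have hpolyineq : ((t^2+6*t+1)/t^2 - t^2/(t^2+6*t+1))/2 - (8*t+8)/(t^2+6*t+1) < 0.079 := by
    have heq : ((t^2+6*t+1)/t^2 - t^2/(t^2+6*t+1))/2 - (8*t+8)/(t^2+6*t+1)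
        = ((t^2+6*t+1)^2 - t^4 - 2*t^2*(8*t+8))/(2*t^2*(t^2+6*t+1)) := by
      field_simp
    rw [heq, div_lt_iff₀ (by positivity)]
    nlinarith [sq_nonneg (t-7), pow_pos ht 3, pow_pos ht 4]
  have hc : (0.079 : ℝ) < 3*Real.log 2 - 2 := by
    have := log_two_lb; linarith
  have : Fd t = -(Real.log y) + (8*t+8)/(t^2+6*t+1) + (3*Real.log 2 - 2) := by
    unfold Fd; rw [hlogy]; ring
  rw [this]
  rw [hyy] at htrap
  linarith

lemma Ff_one : Ff 1 = 0 := by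
  unfold Ff
  norm_num

lemma Ff_pos {t : ℝ} (h1 : 1 < t) : 0 < Ff t := by
  have mono : StrictMonoOn Ff (Ici 1) := by
    apply strictMonoOn_of_deriv_pos (convex_Ici 1)
    · intro x hx
      exact (hasDerivAt_Ff (by linarith [mem_Ici.1 hx] : (0:ℝ) < x)).continuousAt.continuousWithinAt
    · intro x hx
      rw [interior_Ici] at hx
      have hx1 : (1:ℝ) < x := mem_Ioi.1 hx
      rw [(hasDerivAt_Ff (by linarith : (0:ℝ) < x)).deriv]
      rcases le_or_gt x 7 with h | h
      · exact Fd_pos_small hx1 h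
      · exact Fd_pos_large h.le
  have := mono (mem_Ici.2 le_rfl) (mem_Ici.2 h1.le) h1
  rwa [Ff_one] at this

lemma key_log {a b : ℝ} (hb : 0 < b) (hba : b < a) :
    Real.log ((((a+b)/2)^2 + a*b)/2) < 2*((a*Real.log a - b*Real.log b)/(a-b) - 1) := by
  have ha : 0 < a := lt_trans hb hba
  set t : ℝ := a/b with htdef
  have ht1 : 1 < t := (one_lt_div hb).2 hba
  have ht0 : 0 < t := by linarith
  have hab : a = t*b := by
    rw [htdef, div_mul_cancel₀ a hb.ne']
  have hD := hDpos ht0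
  have hFf := Ff_pos ht1
  unfold Ff at hFf
  -- LHS rewrite
  have hL : (((a+b)/2)^2 + a*b)/2 = b^2 * ((t^2+6*t+1)/8) := by
    rw [hab]; ring
  have hLlog : Real.log ((((a+b)/2)^2 + a*b)/2)
      = 2*Real.log b + Real.log ((t^2+6*t+1)/8) := by
    rw [hL, Real.log_mul (by positivity) (by positivity), Real.log_pow]
    norm_num
  -- RHS rewrite
  have hbne : b ≠ 0 := hb.ne'
  have htm : t - 1 ≠ 0 := by intro h; nlinarith
  have hR : (a*Real.log a - b*Real.log b)/(a-b) = t*Real.log t/(t-1) + Real.log b := by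
    rw [hab, Real.log_mul ht0.ne' hb.ne']
    rw [show t*b - b = b*(t-1) by ring]
    field_simp
    ring
  rw [hLlog, hR]
  have ht1' : (0:ℝ) < t - 1 := by linarith
  rw [show 2*(t*Real.log t/(t-1) + Real.log b - 1)
      = 2*t*Real.log t/(t-1) + 2*Real.log b - 2 by ring]
  have : (2 + Real.log ((t^2+6*t+1)/8)) < 2*t*Real.log t/(t-1) := by
    rw [lt_div_iff₀ ht1']
    nlinarith
  linarith


lemma I_exp {a b : ℝ} (ha : 0 < a) (hb : 0 < b) :
    I a b = Real.exp ((a*Real.log a - b*Real.log b)/(a-b) - 1) := by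
  unfold I
  rw [Real.rpow_def_of_pos ha, Real.rpow_def_of_pos hb, ← Real.exp_sub,
    ← Real.exp_mul, show (1:ℝ)/Real.exp 1 = Real.exp (-1) by rw [Real.exp_neg, one_div],
    ← Real.exp_add]
  congr 1
  ring

lemma main_half {a b : ℝ} (hb : 0 < b) (hba : b < a) :
    2 * I a b ^ 2 > A a b ^ 2 + G a b ^ 2 ∧ I a b > Q (A a b) (G a b) := by
  have ha : 0 < a := hb.trans hba
  have hG2 : G a b ^ 2 = a*b := Real.sq_sqrt (by positivity)
  set L : ℝ := (a*Real.log a - b*Real.log b)/(a-b) - 1 with hL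
  have hI : I a b = Real.exp L := I_exp ha hb
  have hS : (0:ℝ) < (((a+b)/2)^2 + a*b)/2 := by positivity
  have hkey := key_log hb hba
  have hexp2 : Real.exp L ^ 2 = Real.exp (2*L) := by
    rw [sq, ← Real.exp_add]; ring_nf
  have h2 : (((a+b)/2)^2 + a*b)/2 < Real.exp L ^ 2 := by
    have := Real.exp_lt_exp.2 hkey
    rw [Real.exp_log hS] at this
    rw [hexp2]
    exact this
  have h1 : A a b ^ 2 + G a b ^ 2 < 2 * I a b ^ 2 := by
    have hA : A a b ^ 2 = ((a+b)/2)^2 := by unfold A; ring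
    rw [hA, hG2, hI]
    linarith
  refine ⟨h1, ?_⟩
  have hQ : Q (A a b) (G a b) = Real.sqrt ((A a b ^ 2 + G a b ^ 2)/2) := rfl
  rw [hQ]
  have hIpos : 0 < I a b := by rw [hI]; positivity
  rw [gt_iff_lt, Real.sqrt_lt' hIpos]
  linarith

theorem stmt_1 (a b : ℝ) (ha : 0 < a) (hb : 0 < b) (hab : a ≠ b) :
    2 * I a b ^ 2 > A a b ^ 2 + G a b ^ 2 ∧ I a b > Q (A a b) (G a b) := by
  rcases lt_or_gt_of_ne hab with h | h
  · have hs := main_half ha h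
    have hA : A a b = A b a := by unfold A; ring
    have hG : G a b = G b a := by unfold G; rw [mul_comm]
    have hI : I a b = I b a := I_symm ha hb
    rw [hA, hG, hI]
    exact hs
  · exact main_half hb h
end

section
/- For all distinct positive real numbers a and b, 2·I(a,b)²/(A(a,b)² + G(a,b)²) < 23/20. -/
set_option maxHeartbeats 2000000

noncomputable def Dpoly (u : ℝ) : ℝ := u/3 + u^2/10 + u^3/21 + u^4/36 + u^5/55 + u^6/78
  + u^7/105 + u^8/136 + u^9/171 + u^10/210 + u^11/253 + u^12/300

lemma logLB (x : ℝ) (h0 : 0 ≤ x) (h1 : x < 1) :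
    x + x^2/2 + x^3/3 + x^4/4 + x^5/5 + x^6/6 + x^7/7 + x^8/8 + x^9/9 + x^10/10
      + x^11/11 + x^12/12 ≤ -Real.log (1-x) := by
  set f : ℝ → ℝ := fun t => -Real.log (1-t) - (t + t^2/2 + t^3/3 + t^4/4 + t^5/5 + t^6/6
      + t^7/7 + t^8/8 + t^9/9 + t^10/10 + t^11/11 + t^12/12) with hf
  have hd : ∀ t : ℝ, 0 ≤ t → t < 1 → HasDerivAt f (t^12/(1-t)) t := by
    intro t _ ht1
    have hne : (1:ℝ) - t ≠ 0 := by linarith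
    have hlog : HasDerivAt (fun t : ℝ => Real.log (1-t)) (-(1-t)⁻¹) t := by
      have h := (Real.hasDerivAt_log hne).comp t ((hasDerivAt_const t (1:ℝ)).sub (hasDerivAt_id t))
      refine h.congr_deriv ?_
      ring
    have hpoly : HasDerivAt (fun t : ℝ => t + t^2/2 + t^3/3 + t^4/4 + t^5/5 + t^6/6
        + t^7/7 + t^8/8 + t^9/9 + t^10/10 + t^11/11 + t^12/12)
        (1 + t + t^2 + t^3 + t^4 + t^5 + t^6 + t^7 + t^8 + t^9 + t^10 + t^11) t := by
      have h := ((((((((((((hasDerivAt_id t).add ((hasDerivAt_pow 2 t).div_const 2)).add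
        ((hasDerivAt_pow 3 t).div_const 3)).add ((hasDerivAt_pow 4 t).div_const 4)).add
        ((hasDerivAt_pow 5 t).div_const 5)).add ((hasDerivAt_pow 6 t).div_const 6)).add
        ((hasDerivAt_pow 7 t).div_const 7)).add ((hasDerivAt_pow 8 t).div_const 8)).add
        ((hasDerivAt_pow 9 t).div_const 9)).add ((hasDerivAt_pow 10 t).div_const 10)).add
        ((hasDerivAt_pow 11 t).div_const 11)).add ((hasDerivAt_pow 12 t).div_const 12))
      refine h.congr_deriv ?_
      push_cast
      ring
    have h := (hlog.neg).sub hpoly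
    refine h.congr_deriv ?_
    field_simp
    ring
  have key : MonotoneOn f (Set.Icc 0 x) := by
    apply monotoneOn_of_hasDerivWithinAt_nonneg (convex_Icc 0 x) (f' := fun t => t^12/(1-t))
    · apply ContinuousOn.sub
      · apply ContinuousOn.neg
        apply ContinuousOn.log
        · fun_prop
        · intro t ht
          simp only [Set.mem_Icc] at ht
          exact sub_ne_zero.2 (by intro h; nlinarith [ht.2])
      · fun_prop
    · intro t ht
      rw [interior_Icc] at ht
      exact ((hd t ht.1.le (lt_trans ht.2 h1)).hasDerivWithinAt)
    · intro t ht
      rw [interior_Icc] at ht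
      have ht1 : t < 1 := lt_trans ht.2 h1
      exact div_nonneg (pow_nonneg ht.1.le 12) (by linarith)
  have h2 := key (Set.left_mem_Icc.2 h0) (Set.right_mem_Icc.2 h0) h0
  have h3 : f 0 = 0 := by simp [hf]
  rw [h3] at h2
  simp only [hf] at h2
  linarith

lemma FB (s : ℝ) (h0 : 0 ≤ s) (h1 : s < 1) :
    (1+s) * Real.log (1+s) - (1-s) * Real.log (1-s) ≤
      2*s - (s^3/3 + s^5/10 + s^7/21 + s^9/36 + s^11/55 + s^13/78 + s^15/105 + s^17/136
        + s^19/171 + s^21/210 + s^23/253 + s^25/300) := by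
  set g : ℝ → ℝ := fun t => 2*t - (t^3/3 + t^5/10 + t^7/21 + t^9/36 + t^11/55 + t^13/78
      + t^15/105 + t^17/136 + t^19/171 + t^21/210 + t^23/253 + t^25/300)
      - ((1+t) * Real.log (1+t) - (1-t) * Real.log (1-t)) with hg
  have hd : ∀ t : ℝ, 0 ≤ t → t < 1 → HasDerivAt g
      (-(Real.log (1+t) + Real.log (1-t))
        - (t^2 + t^4/2 + t^6/3 + t^8/4 + t^10/5 + t^12/6 + t^14/7 + t^16/8 + t^18/9
          + t^20/10 + t^22/11 + t^24/12)) t := by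
    intro t ht0 ht1
    have hne1 : (1:ℝ) + t ≠ 0 := by linarith
    have hne2 : (1:ℝ) - t ≠ 0 := by linarith
    have hlog1 : HasDerivAt (fun t : ℝ => Real.log (1+t)) ((1+t)⁻¹) t := by
      have h := (Real.hasDerivAt_log hne1).comp t ((hasDerivAt_const t (1:ℝ)).add (hasDerivAt_id t))
      refine h.congr_deriv ?_; ring
    have hlog2 : HasDerivAt (fun t : ℝ => Real.log (1-t)) (-(1-t)⁻¹) t := by
      have h := (Real.hasDerivAt_log hne2).comp t ((hasDerivAt_const t (1:ℝ)).sub (hasDerivAt_id t))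
      refine h.congr_deriv ?_; ring
    have hF : HasDerivAt (fun t : ℝ => (1+t) * Real.log (1+t) - (1-t) * Real.log (1-t))
        (Real.log (1+t) + Real.log (1-t) + 2) t := by
      have ha : HasDerivAt (fun t : ℝ => (1+t)) 1 t := by
        have := (hasDerivAt_const t (1:ℝ)).add (hasDerivAt_id t)
        refine this.congr_deriv ?_; ring
      have hb : HasDerivAt (fun t : ℝ => (1-t)) (-1) t := by
        have := (hasDerivAt_const t (1:ℝ)).sub (hasDerivAt_id t)
        refine this.congr_deriv ?_; ring
      have h := (ha.mul hlog1).sub (hb.mul hlog2)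
      refine h.congr_deriv ?_
      field_simp
      ring
    have hpoly : HasDerivAt (fun t : ℝ => 2*t - (t^3/3 + t^5/10 + t^7/21 + t^9/36 + t^11/55
        + t^13/78 + t^15/105 + t^17/136 + t^19/171 + t^21/210 + t^23/253 + t^25/300))
        (2 - (t^2 + t^4/2 + t^6/3 + t^8/4 + t^10/5 + t^12/6 + t^14/7 + t^16/8 + t^18/9
          + t^20/10 + t^22/11 + t^24/12)) t := by
      have h := ((hasDerivAt_id t).const_mul 2).sub
        ((((((((((((((hasDerivAt_pow 3 t).div_const 3).add ((hasDerivAt_pow 5 t).div_const 10)).add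
        ((hasDerivAt_pow 7 t).div_const 21)).add ((hasDerivAt_pow 9 t).div_const 36)).add
        ((hasDerivAt_pow 11 t).div_const 55)).add ((hasDerivAt_pow 13 t).div_const 78)).add
        ((hasDerivAt_pow 15 t).div_const 105)).add ((hasDerivAt_pow 17 t).div_const 136)).add
        ((hasDerivAt_pow 19 t).div_const 171)).add ((hasDerivAt_pow 21 t).div_const 210)).add
        ((hasDerivAt_pow 23 t).div_const 253)).add ((hasDerivAt_pow 25 t).div_const 300)))
      refine h.congr_deriv ?_
      push_cast
      ring
    have h := hpoly.sub hF
    refine h.congr_deriv ?_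
    ring
  have key : MonotoneOn g (Set.Icc 0 s) := by
    apply monotoneOn_of_hasDerivWithinAt_nonneg (convex_Icc 0 s)
      (f' := fun t => -(Real.log (1+t) + Real.log (1-t))
        - (t^2 + t^4/2 + t^6/3 + t^8/4 + t^10/5 + t^12/6 + t^14/7 + t^16/8 + t^18/9
          + t^20/10 + t^22/11 + t^24/12))
    · apply ContinuousOn.sub
      · fun_prop
      · apply ContinuousOn.sub
        · apply ContinuousOn.mul
          · fun_prop
          · apply ContinuousOn.log
            · fun_prop
            · intro t ht
              simp only [Set.mem_Icc] at ht
              intro h; nlinarith [ht.1]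
        · apply ContinuousOn.mul
          · fun_prop
          · apply ContinuousOn.log
            · fun_prop
            · intro t ht
              simp only [Set.mem_Icc] at ht
              intro h; nlinarith [ht.2]
    · intro t ht
      rw [interior_Icc] at ht
      exact ((hd t ht.1.le (lt_trans ht.2 h1)).hasDerivWithinAt)
    · intro t ht
      rw [interior_Icc] at ht
      have ht0 : (0:ℝ) ≤ t := ht.1.le
      have ht1 : t < 1 := lt_trans ht.2 h1
      have hx0 : (0:ℝ) ≤ t^2 := sq_nonneg t
      have hx1 : t^2 < 1 := by nlinarith
      have hlb := logLB (t^2) hx0 hx1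
      have hprod : Real.log (1 - t^2) = Real.log (1+t) + Real.log (1-t) := by
        rw [show (1:ℝ) - t^2 = (1+t)*(1-t) by ring]
        exact Real.log_mul (by linarith) (by linarith)
      rw [hprod] at hlb
      nlinarith [hlb]
  have h2 := key (Set.left_mem_Icc.2 h0) (Set.right_mem_Icc.2 h0) h0
  have h3 : g 0 = 0 := by simp [hg]
  rw [h3] at h2
  simp only [hg] at h2
  linarith

lemma cell (lo w c u : ℝ) (hlo : 0 ≤ lo) (hlu : lo ≤ u) (huw : u ≤ w)
    (hc : 0 ≤ c) (hcD : c ≤ Dpoly lo) (hnum : 40 < 23*(2-w)*(1+c+c^2/2+c^3/6)) :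
    Real.exp (-(Dpoly u)) < 23/40*(2-u) := by
  have hmono : Dpoly lo ≤ Dpoly u := by
    unfold Dpoly
    gcongr
  have h1 : Real.exp (-(Dpoly u)) ≤ Real.exp (-c) := Real.exp_le_exp.2 (by linarith)
  have hE : 1+c+c^2/2+c^3/6 ≤ Real.exp c := by
    have h := Real.sum_le_exp_of_nonneg hc 4
    simp [Finset.sum_range_succ, Nat.factorial] at h
    linarith
  have hEpos : (0:ℝ) < 1+c+c^2/2+c^3/6 := by positivity
  have h2 : Real.exp (-c) ≤ 1/(1+c+c^2/2+c^3/6) := by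
    rw [Real.exp_neg, ← one_div]
    exact one_div_le_one_div_of_le hEpos hE
  have h3 : 1/(1+c+c^2/2+c^3/6) < 23/40*(2-w) := by
    rw [div_lt_iff₀ hEpos]
    nlinarith
  have : (23:ℝ)/40*(2-w) ≤ 23/40*(2-u) := by nlinarith
  linarith

lemma core (u : ℝ) (h0 : 0 < u) (h1 : u ≤ 1) : Real.exp (-(Dpoly u)) < 23/40*(2-u) := by
  rcases le_or_gt u (651/2500) with k0 | k0
  · exact cell (0) (651/2500) (0) u (by norm_num) (by linarith [h0.le]) k0 (by norm_num) (by norm_num [Dpoly]) (by norm_num)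
  rcases le_or_gt u (2087/5000) with k1 | k1
  · exact cell (651/2500) (2087/5000) (5911/62500) u (by norm_num) (by linarith [k0.le]) k1 (by norm_num) (by norm_num [Dpoly]) (by norm_num)
  rcases le_or_gt u (5193/10000) with k2 | k2
  · exact cell (2087/5000) (5193/10000) (1611909/10000000) u (by norm_num) (by linarith [k1.le]) k2 (by norm_num) (by norm_num [Dpoly]) (by norm_num)
  rcases le_or_gt u (737/1250) with k3 | k3
  · exact cell (5193/10000) (737/1250) (2098569/10000000) u (by norm_num) (by linarith [k2.le]) k3 (by norm_num) (by norm_num [Dpoly]) (by norm_num)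
  rcases le_or_gt u (1281/2000) with k4 | k4
  · exact cell (737/1250) (1281/2000) (98673/400000) u (by norm_num) (by linarith [k3.le]) k4 (by norm_num) (by norm_num [Dpoly]) (by norm_num)
  rcases le_or_gt u (6789/10000) with k5 | k5
  · exact cell (1281/2000) (6789/10000) (688481/2500000) u (by norm_num) (by linarith [k4.le]) k5 (by norm_num) (by norm_num [Dpoly]) (by norm_num)
  rcases le_or_gt u (443/625) with k6 | k6
  · exact cell (6789/10000) (443/625) (1492001/5000000) u (by norm_num) (by linarith [k5.le]) k6 (by norm_num) (by norm_num [Dpoly]) (by norm_num)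
  rcases le_or_gt u (7329/10000) with k7 | k7
  · exact cell (443/625) (7329/10000) (1586187/5000000) u (by norm_num) (by linarith [k6.le]) k7 (by norm_num) (by norm_num [Dpoly]) (by norm_num)
  rcases le_or_gt u (7527/10000) with k8 | k8
  · exact cell (7329/10000) (7527/10000) (3330797/10000000) u (by norm_num) (by linarith [k7.le]) k8 (by norm_num) (by norm_num [Dpoly]) (by norm_num)
  rcases le_or_gt u (7693/10000) with k9 | k9
  · exact cell (7527/10000) (7693/10000) (17329/50000) u (by norm_num) (by linarith [k8.le]) k9 (by norm_num) (by norm_num [Dpoly]) (by norm_num)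
  rcases le_or_gt u (1959/2500) with k10 | k10
  · exact cell (7693/10000) (1959/2500) (3582643/10000000) u (by norm_num) (by linarith [k9.le]) k10 (by norm_num) (by norm_num [Dpoly]) (by norm_num)
  rcases le_or_gt u (199/250) with k11 | k11
  · exact cell (1959/2500) (199/250) (3686167/10000000) u (by norm_num) (by linarith [k10.le]) k11 (by norm_num) (by norm_num [Dpoly]) (by norm_num)
  rcases le_or_gt u (807/1000) with k12 | k12
  · exact cell (199/250) (807/1000) (1889113/5000000) u (by norm_num) (by linarith [k11.le]) k12 (by norm_num) (by norm_num [Dpoly]) (by norm_num)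
  rcases le_or_gt u (1021/1250) with k13 | k13
  · exact cell (807/1000) (1021/1250) (965443/2500000) u (by norm_num) (by linarith [k12.le]) k13 (by norm_num) (by norm_num [Dpoly]) (by norm_num)
  rcases le_or_gt u (8257/10000) with k14 | k14
  · exact cell (1021/1250) (8257/10000) (3937769/10000000) u (by norm_num) (by linarith [k13.le]) k14 (by norm_num) (by norm_num [Dpoly]) (by norm_num)
  rcases le_or_gt u (8339/10000) with k15 | k15
  · exact cell (8257/10000) (8339/10000) (1002031/2500000) u (by norm_num) (by linarith [k14.le]) k15 (by norm_num) (by norm_num [Dpoly]) (by norm_num)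
  rcases le_or_gt u (1683/2000) with k16 | k16
  · exact cell (8339/10000) (1683/2000) (4074119/10000000) u (by norm_num) (by linarith [k15.le]) k16 (by norm_num) (by norm_num [Dpoly]) (by norm_num)
  rcases le_or_gt u (8487/10000) with k17 | k17
  · exact cell (1683/2000) (8487/10000) (4136329/10000000) u (by norm_num) (by linarith [k16.le]) k17 (by norm_num) (by norm_num [Dpoly]) (by norm_num)
  rcases le_or_gt u (1711/2000) with k18 | k18
  · exact cell (8487/10000) (1711/2000) (4196227/10000000) u (by norm_num) (by linarith [k17.le]) k18 (by norm_num) (by norm_num [Dpoly]) (by norm_num)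
  rcases le_or_gt u (431/500) with k19 | k19
  · exact cell (1711/2000) (431/500) (2126843/5000000) u (by norm_num) (by linarith [k18.le]) k19 (by norm_num) (by norm_num [Dpoly]) (by norm_num)
  rcases le_or_gt u (8683/10000) with k20 | k20
  · exact cell (431/500) (8683/10000) (4309443/10000000) u (by norm_num) (by linarith [k19.le]) k20 (by norm_num) (by norm_num [Dpoly]) (by norm_num)
  rcases le_or_gt u (1093/1250) with k21 | k21
  · exact cell (8683/10000) (1093/1250) (34096/78125) u (by norm_num) (by linarith [k20.le]) k21 (by norm_num) (by norm_num [Dpoly]) (by norm_num)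
  rcases le_or_gt u (2201/2500) with k22 | k22
  · exact cell (1093/1250) (2201/2500) (4418169/10000000) u (by norm_num) (by linarith [k21.le]) k22 (by norm_num) (by norm_num [Dpoly]) (by norm_num)
  rcases le_or_gt u (8863/10000) with k23 | k23
  · exact cell (2201/2500) (8863/10000) (894387/2000000) u (by norm_num) (by linarith [k22.le]) k23 (by norm_num) (by norm_num [Dpoly]) (by norm_num)
  rcases le_or_gt u (4461/5000) with k24 | k24
  · exact cell (8863/10000) (4461/5000) (452557/1000000) u (by norm_num) (by linarith [k23.le]) k24 (by norm_num) (by norm_num [Dpoly]) (by norm_num)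
  rcases le_or_gt u (4491/5000) with k25 | k25
  · exact cell (4461/5000) (4491/5000) (4579987/10000000) u (by norm_num) (by linarith [k24.le]) k25 (by norm_num) (by norm_num [Dpoly]) (by norm_num)
  rcases le_or_gt u (9043/10000) with k26 | k26
  · exact cell (4491/5000) (9043/10000) (4636153/10000000) u (by norm_num) (by linarith [k25.le]) k26 (by norm_num) (by norm_num [Dpoly]) (by norm_num)
  rcases le_or_gt u (4553/5000) with k27 | k27
  · exact cell (9043/10000) (4553/5000) (586767/1250000) u (by norm_num) (by linarith [k26.le]) k27 (by norm_num) (by norm_num [Dpoly]) (by norm_num)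
  rcases le_or_gt u (9171/10000) with k28 | k28
  · exact cell (4553/5000) (9171/10000) (4754981/10000000) u (by norm_num) (by linarith [k27.le]) k28 (by norm_num) (by norm_num [Dpoly]) (by norm_num)
  rcases le_or_gt u (9239/10000) with k29 | k29
  · exact cell (9171/10000) (9239/10000) (37647/78125) u (by norm_num) (by linarith [k28.le]) k29 (by norm_num) (by norm_num [Dpoly]) (by norm_num)
  rcases le_or_gt u (9311/10000) with k30 | k30
  · exact cell (9239/10000) (9311/10000) (2443393/5000000) u (by norm_num) (by linarith [k29.le]) k30 (by norm_num) (by norm_num [Dpoly]) (by norm_num)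
  rcases le_or_gt u (2347/2500) with k31 | k31
  · exact cell (9311/10000) (2347/2500) (38751/78125) u (by norm_num) (by linarith [k30.le]) k31 (by norm_num) (by norm_num [Dpoly]) (by norm_num)
  rcases le_or_gt u (592/625) with k32 | k32
  · exact cell (2347/2500) (592/625) (5040187/10000000) u (by norm_num) (by linarith [k31.le]) k32 (by norm_num) (by norm_num [Dpoly]) (by norm_num)
  rcases le_or_gt u (2391/2500) with k33 | k33
  · exact cell (592/625) (2391/2500) (2564759/5000000) u (by norm_num) (by linarith [k32.le]) k33 (by norm_num) (by norm_num [Dpoly]) (by norm_num)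
  rcases le_or_gt u (9667/10000) with k34 | k34
  · exact cell (2391/2500) (9667/10000) (2614927/5000000) u (by norm_num) (by linarith [k33.le]) k34 (by norm_num) (by norm_num [Dpoly]) (by norm_num)
  rcases le_or_gt u (1223/1250) with k35 | k35
  · exact cell (9667/10000) (1223/1250) (5345441/10000000) u (by norm_num) (by linarith [k34.le]) k35 (by norm_num) (by norm_num [Dpoly]) (by norm_num)
  rcases le_or_gt u (124/125) with k36 | k36
  · exact cell (1223/1250) (124/125) (85643/156250) u (by norm_num) (by linarith [k35.le]) k36 (by norm_num) (by norm_num [Dpoly]) (by norm_num)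
  · exact cell (124/125) (1) (1129039/2000000) u (by norm_num) (by linarith [k36.le]) h1 (by norm_num) (by norm_num [Dpoly]) (by norm_num)

lemma main' (a b : ℝ) (hb : 0 < b) (hba : b < a) :
    2 * I a b ^ 2 / (A a b ^ 2 + G a b ^ 2) < 23 / 20 := by
  have ha : 0 < a := lt_trans hb hba
  set t : ℝ := (a + b) / 2 with ht
  set s : ℝ := (a - b) / (a + b) with hs
  have htpos : 0 < t := by positivity
  have hspos : 0 < s := by
    apply div_pos (by linarith) (by linarith)
  have hs1 : s < 1 := by
    rw [hs, div_lt_one (by linarith)]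
    linarith
  have hab : a = t * (1 + s) := by
    rw [ht, hs]
    field_simp
    ring
  have hbb : b = t * (1 - s) := by
    rw [ht, hs]
    field_simp
    ring
  have hamb : a - b = 2 * t * s := by
    rw [ht, hs]
    field_simp
  -- I as exp
  have hI : I a b = Real.exp ((Real.log a * a - Real.log b * b) / (a - b) - 1) := by
    rw [I, Real.rpow_def_of_pos ha, Real.rpow_def_of_pos hb, ← Real.exp_sub,
      Real.rpow_def_of_pos (Real.exp_pos _), Real.log_exp]
    rw [Real.exp_sub]
    rw [mul_comm, mul_one_div, mul_one_div]
  -- logs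
  have hloga : Real.log a = Real.log t + Real.log (1 + s) := by
    rw [hab, Real.log_mul (ne_of_gt htpos) (by linarith)]
  have hlogb : Real.log b = Real.log t + Real.log (1 - s) := by
    rw [hbb, Real.log_mul (ne_of_gt htpos) (by nlinarith)]
  have hQ : (Real.log a * a - Real.log b * b) / (a - b) - 1
      = Real.log t + (((1+s) * Real.log (1+s) - (1-s) * Real.log (1-s)) / s - 2) / 2 := by
    rw [hloga, hlogb, hamb]
    rw [hab, hbb]
    field_simp
    ring
  -- bound exponent
  have hFB := FB s hspos.le hs1
  have hexp : ((1+s) * Real.log (1+s) - (1-s) * Real.log (1-s)) / s - 2 ≤ -(Dpoly (s^2)) := by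
    rw [div_sub' (ne_of_gt hspos), div_le_iff₀ hspos]
    unfold Dpoly
    nlinarith [hFB]
  have hu0 : 0 < s^2 := by positivity
  have hu1 : s^2 ≤ 1 := by nlinarith
  have hcore := core (s^2) hu0 hu1
  have hexp2 : Real.exp (((1+s) * Real.log (1+s) - (1-s) * Real.log (1-s)) / s - 2)
      < 23/40 * (2 - s^2) := by
    calc Real.exp (((1+s) * Real.log (1+s) - (1-s) * Real.log (1-s)) / s - 2)
        ≤ Real.exp (-(Dpoly (s^2))) := Real.exp_le_exp.2 hexp
      _ < 23/40*(2 - s^2) := hcore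
  have hIsq : I a b ^ 2 = t^2 * Real.exp
      (((1+s) * Real.log (1+s) - (1-s) * Real.log (1-s)) / s - 2) := by
    rw [hI, hQ, sq, ← Real.exp_add]
    have : Real.log t + (((1+s)*Real.log (1+s) - (1-s)*Real.log (1-s))/s - 2)/2
        + (Real.log t + (((1+s)*Real.log (1+s) - (1-s)*Real.log (1-s))/s - 2)/2)
        = (Real.log t + Real.log t) + (((1+s)*Real.log (1+s) - (1-s)*Real.log (1-s))/s - 2) := by
      ring
    rw [this, Real.exp_add, Real.exp_add, Real.exp_log htpos, sq]
  have hGsq : G a b ^ 2 = a * b := Real.sq_sqrt (by positivity)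
  have hAG : A a b ^ 2 + G a b ^ 2 = t^2 * (2 - s^2) := by
    rw [hGsq, A, ← ht, hab, hbb]
    ring
  rw [hAG, hIsq, div_lt_iff₀ (by nlinarith [sq_nonneg s])]
  have h2s : (0:ℝ) < 2 - s^2 := by nlinarith
  nlinarith [hexp2, Real.exp_pos (((1+s) * Real.log (1+s) - (1-s) * Real.log (1-s)) / s - 2),
    sq_nonneg t, mul_pos (mul_pos htpos htpos) h2s]

lemma Isymm (a b : ℝ) (ha : 0 < a) (hb : 0 < b) (hab : a ≠ b) : I a b = I b a := by
  rw [I, I]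
  congr 1
  have hx : (0:ℝ) ≤ b ^ b / a ^ a := by
    positivity
  have hba : b - a ≠ 0 := sub_ne_zero.2 (fun h => hab h.symm)
  have h1 : (1:ℝ) / (a - b) = -(1 / (b - a)) := by
    rw [show a - b = -(b - a) by ring, div_neg]
  have h2 : a ^ a / b ^ b = (b ^ b / a ^ a)⁻¹ := by
    rw [inv_div]
  rw [h2, h1, Real.rpow_neg (inv_nonneg.2 hx), Real.inv_rpow hx, inv_inv]

theorem stmt_2 (a b : ℝ) (ha : 0 < a) (hb : 0 < b) (hab : a ≠ b) :
    2 * I a b ^ 2 / (A a b ^ 2 + G a b ^ 2) < 23 / 20 := by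
  rcases lt_trichotomy a b with h | h | h
  · have h2 := main' b a ha h
    rw [Isymm a b ha hb hab, show A a b = A b a by rw [A, A]; ring,
      show G a b = G b a by rw [G, G, mul_comm]]
    exact h2
  · exact absurd h hab
  · exact main' a b hb h
end

section
/- For all distinct positive real numbers a and b, L(A(a,b)², G(a,b)²) = ((A(a,b)+G(a,b))/2)·L(A(a,b), G(a,b)) > ((A(a,b)+G(a,b))/2)·L(a,b) > L(a,b)². -/
lemma log_gt {x : ℝ} (hx : 1 < x) : 2*(x-1)/(x+1) < Real.log x := by
  have key : StrictMonoOn (fun y : ℝ => Real.log y - 2*(y-1)/(y+1)) (Set.Ici 1) := by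
    apply strictMonoOn_of_deriv_pos (convex_Ici 1)
    · apply ContinuousOn.sub
      · exact Real.continuousOn_log.mono (by
          intro y hy
          simp only [Set.mem_Ici, Set.mem_compl_iff, Set.mem_singleton_iff] at *
          intro h; rw [h] at hy; linarith)
      · apply ContinuousOn.div
        · fun_prop
        · fun_prop
        · intro y hy
          simp only [Set.mem_Ici] at hy
          intro h; nlinarith
    · intro y hy
      rw [interior_Ici] at hy
      have hy1 : (1:ℝ) < y := hy
      have h0 : (0:ℝ) < y := by linarith
      have hne : y + 1 ≠ 0 := by positivity
      have h1 : HasDerivAt Real.log y⁻¹ y := Real.hasDerivAt_log (ne_of_gt h0)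
      have h2 : HasDerivAt (fun y : ℝ => 2*(y-1)) 2 y := by
        simpa using ((hasDerivAt_id y).sub_const 1).const_mul 2
      have h3 : HasDerivAt (fun y : ℝ => y+1) 1 y := (hasDerivAt_id y).add_const 1
      have h4 := h2.div h3 hne
      have hd := h1.sub h4
      rw [HasDerivAt.deriv (f := fun y => Real.log y - 2*(y-1)/(y+1)) hd]
      rw [sub_pos]
      have h5 : (2*(y+1) - 2*(y-1)*1)/(y+1)^2 = 4/(y+1)^2 := by ring
      rw [h5]
      rw [inv_eq_one_div, div_lt_div_iff₀ (by positivity) h0]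
      nlinarith
  have h1 := key (Set.self_mem_Ici) (le_of_lt (show (1:ℝ) < x from hx)) hx
  simp only [Real.log_one] at h1
  norm_num at h1
  linarith



lemma keyF {t : ℝ} (ht : 1 < t) :
    (t+1) * Real.log ((t^2+1)/(2*t)) < (t-1) * Real.log t := by
  have key : StrictMonoOn
      (fun y : ℝ => (y-1)*Real.log y - (y+1)*(Real.log (y^2+1) - Real.log (2*y)))
      (Set.Ici 1) := by
    apply strictMonoOn_of_deriv_pos (convex_Ici 1)
    · apply ContinuousOn.sub
      · apply ContinuousOn.mul (by fun_prop)
        exact Real.continuousOn_log.mono (by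
          intro y hy
          simp only [Set.mem_Ici, Set.mem_compl_iff, Set.mem_singleton_iff] at *
          intro h; rw [h] at hy; linarith)
      · apply ContinuousOn.mul (by fun_prop)
        apply ContinuousOn.sub
        · apply ContinuousOn.comp Real.continuousOn_log (by fun_prop)
          intro y hy
          simp only [Set.mem_Ici] at hy
          simp only [Set.mem_compl_iff, Set.mem_singleton_iff]
          nlinarith
        · apply ContinuousOn.comp Real.continuousOn_log (by fun_prop)
          intro y hy
          simp only [Set.mem_Ici] at hy
          simp only [Set.mem_compl_iff, Set.mem_singleton_iff]
          intro h; nlinarith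
    · intro y hy
      rw [interior_Ici] at hy
      have hy1 : (1:ℝ) < y := hy
      have h0 : (0:ℝ) < y := by linarith
      have hsq : (0:ℝ) < y^2+1 := by positivity
      have h1 : HasDerivAt (fun t : ℝ => (t-1)*Real.log t)
          (1 * Real.log y + (y-1)*y⁻¹) y :=
        ((hasDerivAt_id y).sub_const 1).mul (Real.hasDerivAt_log (ne_of_gt h0))
      have hin : HasDerivAt (fun t : ℝ => t^2+1) (2*y) y := by
        simpa using (hasDerivAt_pow 2 y).add_const 1
      have h2 : HasDerivAt (fun t : ℝ => Real.log (t^2+1)) ((y^2+1)⁻¹ * (2*y)) y :=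
        by have := (Real.hasDerivAt_log (ne_of_gt hsq)).comp y hin; exact this
      have hin2 : HasDerivAt (fun t : ℝ => 2*t) 2 y := by
        simpa using (hasDerivAt_id y).const_mul 2
      have h3 : HasDerivAt (fun t : ℝ => Real.log (2*t)) ((2*y)⁻¹ * 2) y :=
        (Real.hasDerivAt_log (by positivity)).comp y hin2
      have h4 : HasDerivAt (fun t : ℝ => (t+1)*(Real.log (t^2+1) - Real.log (2*t)))
          (1 * (Real.log (y^2+1) - Real.log (2*y)) + (y+1)*((y^2+1)⁻¹ * (2*y) - (2*y)⁻¹ * 2)) y :=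
        ((hasDerivAt_id y).add_const 1).mul (h2.sub h3)
      have hd := h1.sub h4
      rw [HasDerivAt.deriv (f := fun y : ℝ => (y-1)*Real.log y - (y+1)*(Real.log (y^2+1) - Real.log (2*y))) hd]
      -- rewrite the log combination
      have hlogcomb : Real.log y - (Real.log (y^2+1) - Real.log (2*y))
          = Real.log (2*y^2/(y^2+1)) := by
        rw [Real.log_div (by positivity) (ne_of_gt hsq),
            Real.log_mul (show (2:ℝ) ≠ 0 by norm_num) (show y^2 ≠ 0 by positivity),
            Real.log_mul (show (2:ℝ) ≠ 0 by norm_num) (ne_of_gt h0), Real.log_pow]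
        push_cast; ring
      have hs : (1:ℝ) < 2*y^2/(y^2+1) := by
        rw [lt_div_iff₀ hsq]; nlinarith
      have hK := log_gt hs
      have e1 : 2*(2*y^2/(y^2+1) - 1)/(2*y^2/(y^2+1) + 1) = 2*(y^2-1)/(3*y^2+1) := by
        rw [div_eq_div_iff (by positivity) (by positivity)]
        field_simp
        ring
      rw [e1] at hK
      have e2 : (y-1)*y⁻¹ - (y+1)*((y^2+1)⁻¹ * (2*y) - (2*y)⁻¹ * 2)
          = -(2*(y-1)/(y^2+1)) := by
        field_simp
        ring
      have e3 : 2*(y-1)/(y^2+1) ≤ 2*(y^2-1)/(3*y^2+1) := by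
        rw [div_le_div_iff₀ (by positivity) (by positivity)]
        nlinarith [mul_nonneg (mul_nonneg h0.le (sub_nonneg.2 hy1.le)) (sq_nonneg (y-1))]
      have goal_eq : 1 * Real.log y + (y-1)*y⁻¹ -
          (1 * (Real.log (y^2+1) - Real.log (2*y)) + (y+1)*((y^2+1)⁻¹ * (2*y) - (2*y)⁻¹ * 2))
          = Real.log (2*y^2/(y^2+1)) - 2*(y-1)/(y^2+1) := by
        rw [← hlogcomb]
        linarith [e2]
      rw [goal_eq]
      linarith
  have h1 := key (Set.self_mem_Ici) (le_of_lt (show (1:ℝ) < t from ht)) ht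
  norm_num at h1
  have hlog : Real.log ((t^2+1)/(2*t)) = Real.log (t^2+1) - Real.log (2*t) :=
    Real.log_div (by positivity) (by positivity)
  rw [hlog]
  linarith



noncomputable def L (a b : ℝ) : ℝ := (a - b) / (Real.log a - Real.log b)

lemma stmt5_aux (a b : ℝ) (ha : 0 < a) (hb : 0 < b) (hlt : b < a) :
    L (A a b ^ 2) (G a b ^ 2) = ((A a b + G a b) / 2) * L (A a b) (G a b) ∧
    ((A a b + G a b) / 2) * L (A a b) (G a b) > ((A a b + G a b) / 2) * L a b ∧
    ((A a b + G a b) / 2) * L a b > L a b ^ 2 := by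
  set x := Real.sqrt a with hxdef
  set y := Real.sqrt b with hydef
  have hx : 0 < x := Real.sqrt_pos.2 ha
  have hy : 0 < y := Real.sqrt_pos.2 hb
  have hxy : y < x := by
    apply Real.sqrt_lt_sqrt hb.le hlt
  have ha2 : a = x^2 := (Real.sq_sqrt ha.le).symm
  have hb2 : b = y^2 := (Real.sq_sqrt hb.le).symm
  set t := x/y with htdef
  have ht : 1 < t := (one_lt_div hy).2 hxy
  have hxt : x = t*y := by rw [htdef, div_mul_cancel₀ x (ne_of_gt hy)]
  have hG : G a b = x*y := by rw [G, Real.sqrt_mul ha.le]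
  have hA : A a b = (x^2+y^2)/2 := by rw [A, ha2, hb2]
  -- logs
  have hlogt : 0 < Real.log t := Real.log_pos ht
  have hlogab : Real.log a - Real.log b = 2 * Real.log t := by
    rw [ha2, hb2, Real.log_pow, Real.log_pow, htdef, Real.log_div (ne_of_gt hx) (ne_of_gt hy)]
    push_cast; ring
  have hAGratio : A a b / G a b = (t^2+1)/(2*t) := by
    rw [hA, hG, hxt]
    field_simp
  have hApos : 0 < A a b := by rw [hA]; positivity
  have hGpos : 0 < G a b := by rw [hG]; positivity
  have hlogAG : Real.log (A a b) - Real.log (G a b) = Real.log ((t^2+1)/(2*t)) := by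
    rw [← Real.log_div (ne_of_gt hApos) (ne_of_gt hGpos), hAGratio]
  set Ls := Real.log ((t^2+1)/(2*t)) with hLsdef
  have hs1 : 1 < (t^2+1)/(2*t) := by
    rw [lt_div_iff₀ (by positivity)]; nlinarith
  have hLs : 0 < Ls := Real.log_pos hs1
  set Lt := Real.log t with hLtdef
  have hK1 : 2*(t-1) < (t+1) * Lt := by
    have := log_gt ht
    rw [div_lt_iff₀ (by positivity)] at this
    linarith
  have hK2 : (t+1) * Ls < (t-1) * Lt := keyF ht
  -- L values
  have hLab : L a b = (x^2 - y^2)/(2*Lt) := by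
    rw [L, hlogab, ← ha2, ← hb2]
  have hLAG : L (A a b) (G a b) = ((x^2+y^2)/2 - x*y)/Ls := by
    rw [L, hlogAG, hA, hG]
  have hlogAG2 : Real.log (A a b ^ 2) - Real.log (G a b ^ 2) = 2 * Ls := by
    rw [Real.log_pow, Real.log_pow]
    push_cast
    linarith [hlogAG, hLsdef]
  -- part 1 : identity
  have part1 : L (A a b ^ 2) (G a b ^ 2) = ((A a b + G a b) / 2) * L (A a b) (G a b) := by
    rw [L, hlogAG2, hLAG, hA, hG]
    field_simp
    ring
  refine ⟨part1, ?_, ?_⟩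
  · -- second: ((A+G)/2) * L(A,G) > ((A+G)/2) * L a b
    have hAGpos : 0 < (A a b + G a b)/2 := by positivity
    apply mul_lt_mul_of_pos_left _ hAGpos
    rw [hLab, hLAG, div_lt_div_iff₀ (by positivity) hLs, hxt]
    have hy2 : (0:ℝ) < (t-1)*y^2 := mul_pos (sub_pos.2 ht) (by positivity)
    have key := mul_lt_mul_of_pos_right hK2 hy2
    linarith [key]
  · -- third
    have hLabpos : 0 < L a b := by
      rw [hLab]
      apply div_pos (by nlinarith) (by positivity)
    have hlt3 : L a b < (A a b + G a b)/2 := by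
      rw [hLab, hA, hG, hxt, div_lt_iff₀ (by positivity)]
      have ht1 : (0:ℝ) < (t+1)*y^2 := mul_pos (by linarith) (by positivity)
      have key1 := mul_lt_mul_of_pos_right hK1 ht1
      linarith [key1]
    calc L a b ^ 2 = L a b * L a b := by ring
      _ < ((A a b + G a b)/2) * L a b := mul_lt_mul_of_pos_right hlt3 hLabpos

theorem stmt_5 (a b : ℝ) (ha : 0 < a) (hb : 0 < b) (hab : a ≠ b) :
    L (A a b ^ 2) (G a b ^ 2) = ((A a b + G a b) / 2) * L (A a b) (G a b) ∧
    ((A a b + G a b) / 2) * L (A a b) (G a b) > ((A a b + G a b) / 2) * L a b ∧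
    ((A a b + G a b) / 2) * L a b > L a b ^ 2 := by
  rcases lt_or_gt_of_ne hab with h | h
  · have hs := stmt5_aux b a hb ha h
    have eA : A b a = A a b := by rw [A, A, add_comm]
    have eG : G b a = G a b := by rw [G, G, mul_comm]
    have eL : L b a = L a b := by
      rw [L, L, ← neg_sub a b, ← neg_sub (Real.log a) (Real.log b), neg_div_neg_eq]
    rw [eA, eG, eL] at hs
    exact hs
  · exact stmt5_aux a b ha hb h
end
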